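/- arXiv:2011.00078 — 4 statements merged into one kernel-verified Lean document; each statement's English description precedes it below -/
import Mathlib

section
/- Let M be a measurable space, κ a Markov kernel from M to M, and μ a probability measure on M invariant for κ (i.e. μ.bind κ = μ). Let ν be the law on path space ℕ → M of the time-homogeneous Markov chain with transition kernel κ and initial distribution μ (constructed via the Ionescu–Tulcea theorem), and let S : (ℕ → M) → (ℕ → M) be the shift map (S u) n = u (n+1). Then S is measure-preserving with respect to ν. -/
open MeasureTheory ProbabilityTheory Filter

/-- The shift map on path space: `(shift u) n = u (n+1)`. -/
def shift {M : Type*} (u : ℕ → M) : ℕ → M := fun n => u (n + 1)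

/-- `ν` is the law on path space `ℕ → M` of the time-homogeneous Markov chain with
transition kernel `κ` and initial distribution `μ` (the measure produced by the
Ionescu–Tulcea theorem), characterized by its finite-dimensional distributions:
the initial law is `μ`, and the conditional law of `u (n+1)` given `(u 0, …, u n)`
is `κ (u n)`. -/
def IsPathMeasure {M : Type*} [MeasurableSpace M] (κ : Kernel M M) [IsMarkovKernel κ]
    (μ : Measure M) (ν : Measure (ℕ → M)) : Prop :=
  IsProbabilityMeasure ν ∧
  ν.map (fun u => u 0) = μ ∧
  ∀ n : ℕ,
    ν.map (fun u => ((fun i : Fin (n + 1) => u i), u (n + 1)))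
      = (ν.map (fun u => fun i : Fin (n + 1) => u i)) ⊗ₘ
        (κ.comap (fun v : Fin (n + 1) → M => v (Fin.last n)) (measurable_pi_apply _))

section Aux

variable {M : Type*} [MeasurableSpace M]

lemma measurable_shift : Measurable (shift (M := M)) :=
  measurable_pi_lambda _ fun n => measurable_pi_apply _

lemma measurable_restr (n : ℕ) :
    Measurable (fun u : ℕ → M => fun i : Fin (n + 1) => u i) :=
  measurable_pi_lambda _ fun i => measurable_pi_apply _

lemma measurable_tailFin (n : ℕ) :
    Measurable (fun v : Fin (n + 2) → M => fun i : Fin (n + 1) => v i.succ) :=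
  measurable_pi_lambda _ fun i => measurable_pi_apply _

lemma measurable_snoc (n : ℕ) :
    Measurable (fun p : (Fin (n + 1) → M) × M => (Fin.snoc p.1 p.2 : Fin (n + 2) → M)) := by
  apply measurable_pi_lambda
  intro i
  refine Fin.lastCases ?_ ?_ i
  · simp only [Fin.snoc_last]; exact measurable_snd
  · intro j; simp only [Fin.snoc_castSucc]
    exact (measurable_pi_apply j).comp measurable_fst

lemma Kernel.comap_congr_fun' {α β γ : Type*} [MeasurableSpace α] [MeasurableSpace β]
    [MeasurableSpace γ] (κ : Kernel α β) {f g : γ → α} (hf : Measurable f) (hg : Measurable g)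
    (h : f = g) : κ.comap f hf = κ.comap g hg := by subst h; rfl

lemma compProd_map_left {α β γ : Type*} [MeasurableSpace α] [MeasurableSpace β]
    [MeasurableSpace γ] (μ : Measure α) [IsProbabilityMeasure μ] {g : α → β} (hg : Measurable g)
    (κ : Kernel β γ) [IsMarkovKernel κ] :
    (μ ⊗ₘ (κ.comap g hg)).map (Prod.map g id) = μ.map g ⊗ₘ κ := by
  haveI : IsProbabilityMeasure (μ.map g) := Measure.isProbabilityMeasure_map hg.aemeasurable
  refine ext_of_generate_finite _ generateFrom_prod.symm isPiSystem_prod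
    (fun S hS => ?_) ?_
  · obtain ⟨s, hs, t, ht, rfl⟩ := hS
    rw [Measure.map_apply ((hg.prodMap measurable_id)) (hs.prod ht)]
    have hpre : Prod.map g id ⁻¹' (s ×ˢ t) = (g ⁻¹' s) ×ˢ t := by
      ext p; simp [Prod.map]
    rw [hpre, Measure.compProd_apply_prod (hg hs) ht,
      Measure.compProd_apply_prod hs ht,
      Measure.restrict_map hg hs,
      lintegral_map (Kernel.measurable_coe κ ht) hg]
    simp [Kernel.comap_apply]
  · simp [Measure.map_apply ((hg.prodMap measurable_id)) MeasurableSet.univ]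

variable (κ : Kernel M M) [IsMarkovKernel κ] (μ : Measure M)

lemma pathMeasure_marginal_eq {ν₁ ν₂ : Measure (ℕ → M)}
    (h₁ : IsPathMeasure κ μ ν₁) (h₂ : IsPathMeasure κ μ ν₂) (n : ℕ) :
    ν₁.map (fun u => fun i : Fin (n + 1) => u i)
      = ν₂.map (fun u => fun i : Fin (n + 1) => u i) := by
  obtain ⟨hp₁, h0₁, hrec₁⟩ := h₁
  obtain ⟨hp₂, h0₂, hrec₂⟩ := h₂
  induction n with
  | zero =>
    have key : ∀ ν : Measure (ℕ → M), ν.map (fun u => fun i : Fin 1 => u i)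
        = (ν.map (fun u => u 0)).map (fun x => fun _ : Fin 1 => x) := by
      intro ν
      rw [Measure.map_map (show Measurable (fun x : M => fun _ : Fin 1 => x) from
        measurable_pi_lambda _ fun _ => measurable_id) (measurable_pi_apply 0)]
      congr 1
      funext u
      funext i
      have : (i : ℕ) = 0 := by omega
      simp [Function.comp, this]
    rw [key, key, h0₁, h0₂]
  | succ n ih =>
    have key : ∀ ν : Measure (ℕ → M), ν.map (fun u => fun i : Fin (n + 2) => u i)
        = (ν.map (fun u => ((fun i : Fin (n + 1) => u i), u (n + 1)))).map
            (fun p => Fin.snoc p.1 p.2) := by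
      intro ν
      rw [Measure.map_map (measurable_snoc n) ((measurable_restr n).prodMk
        (measurable_pi_apply _))]
      congr 1
      funext u
      funext i
      refine Fin.lastCases ?_ ?_ i
      · simp [Fin.snoc_last]
      · intro j; simp [Fin.snoc_castSucc]
    rw [key, key, hrec₁ n, hrec₂ n, ih]

lemma pathMeasure_unique {ν₁ ν₂ : Measure (ℕ → M)}
    (h₁ : IsPathMeasure κ μ ν₁) (h₂ : IsPathMeasure κ μ ν₂) : ν₁ = ν₂ := by
  haveI : IsProbabilityMeasure ν₁ := h₁.1
  haveI : IsProbabilityMeasure ν₂ := h₂.1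
  refine ext_of_generate_finite _ generateFrom_measurableCylinders.symm
    isPiSystem_measurableCylinders (fun s hs => ?_) (by simp)
  obtain ⟨I, S, hS, rfl⟩ := (mem_measurableCylinders _).mp hs
  set n : ℕ := I.sup id with hn
  have hle : ∀ i ∈ I, (i : ℕ) ≤ n := fun i hi => Finset.le_sup (f := id) hi
  set p : (Fin (n + 1) → M) → (∀ i : I, M) :=
    fun v i => v ⟨(i : ℕ), Nat.lt_succ_of_le (hle i i.2)⟩ with hp
  have hpm : Measurable p := measurable_pi_lambda _ fun i => measurable_pi_apply _
  have hcyl : cylinder I S = (fun u : ℕ → M => fun i : Fin (n + 1) => u i) ⁻¹' (p ⁻¹' S) := by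
    ext u
    simp only [mem_cylinder, Set.mem_preimage]
    rfl
  rw [hcyl, ← Measure.map_apply (measurable_restr n) (hpm hS),
    ← Measure.map_apply (measurable_restr n) (hpm hS),
    pathMeasure_marginal_eq κ μ h₁ h₂ n]

end Aux

/-- If `μ` is invariant for the Markov kernel `κ`, then the shift map is
measure-preserving for the path measure of the chain started from `μ`. -/
theorem stmt0 {M : Type*} [MeasurableSpace M] (κ : Kernel M M) [IsMarkovKernel κ]
    (μ : Measure M) [IsProbabilityMeasure μ]
    (hinv : μ.bind (fun x => κ x) = μ)
    (ν : Measure (ℕ → M)) (hν : IsPathMeasure κ μ ν) :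
    MeasurePreserving shift ν ν := by
  obtain ⟨hp, h0, hrec⟩ := hν
  haveI : IsProbabilityMeasure ν := hp
  have hshift : Measurable (shift (M := M)) := measurable_shift
  suffices h : IsPathMeasure κ μ (ν.map shift) by
    exact ⟨hshift, pathMeasure_unique κ μ h ⟨hp, h0, hrec⟩⟩
  haveI : IsProbabilityMeasure (ν.map shift) := Measure.isProbabilityMeasure_map hshift.aemeasurable
  refine ⟨this, ?_, ?_⟩
  · -- (ν.map shift).map (eval 0) = ν.map (eval 1) = μ
    rw [Measure.map_map (measurable_pi_apply 0) hshift]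
    have h1 : (fun u : ℕ → M => u 0) ∘ shift = fun u : ℕ → M => u 1 := rfl
    rw [h1]
    -- use hrec 0, take second marginal
    have h2 : ν.map (fun u : ℕ → M => u 1)
        = (ν.map (fun u => ((fun i : Fin 1 => u i), u 1))).map Prod.snd := by
      rw [Measure.map_map measurable_snd ((measurable_restr 0).prodMk (measurable_pi_apply 1))]
      rfl
    rw [h2, hrec 0]
    -- snd of compProd is bind
    ext t ht
    haveI : IsProbabilityMeasure (ν.map (fun u : ℕ → M => fun i : Fin 1 => u i)) :=
      Measure.isProbabilityMeasure_map (measurable_restr 0).aemeasurable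
    rw [Measure.map_apply measurable_snd ht]
    have hpre : (Prod.snd : (Fin 1 → M) × M → M) ⁻¹' t = Set.univ ×ˢ t := by
      ext p; simp
    rw [hpre, Measure.compProd_apply_prod MeasurableSet.univ ht, Measure.restrict_univ,
      lintegral_map (Kernel.measurable_coe _ ht) (measurable_restr 0)]
    simp only [Kernel.comap_apply, Fin.val_last]
    have : ∫⁻ u, κ (u 0) t ∂ν = ∫⁻ x, κ x t ∂μ := by
      rw [← h0, lintegral_map (Kernel.measurable_coe κ ht) (measurable_pi_apply 0)]
    rw [this, ← Measure.bind_apply ht (κ.measurable.aemeasurable), hinv]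
  · intro n
    haveI : IsProbabilityMeasure (ν.map (fun u : ℕ → M => fun i : Fin (n + 2) => u i)) :=
      Measure.isProbabilityMeasure_map (measurable_restr (n + 1)).aemeasurable
    -- map hrec (n+1) by Prod.map g id where g v i = v i.succ
    have key := congrArg (fun m : Measure ((Fin (n + 2) → M) × M) =>
      m.map (Prod.map (fun v : Fin (n + 2) → M => fun i : Fin (n + 1) => v i.succ) id))
      (hrec (n + 1))
    rw [Measure.map_map (((measurable_tailFin n)).prodMap measurable_id)
      ((measurable_restr (n + 1)).prodMk (measurable_pi_apply _))] at key
    have hK : (κ.comap (fun v : Fin (n + 2) → M => v (Fin.last (n + 1)))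
          (measurable_pi_apply _))
        = Kernel.comap (κ.comap (fun v : Fin (n + 1) → M => v (Fin.last n))
            (measurable_pi_apply _))
          (fun v : Fin (n + 2) → M => fun i : Fin (n + 1) => v i.succ)
          (measurable_tailFin n) := by
      ext a s hs
      simp only [Kernel.comap_apply]
      rw [← Fin.succ_last]
    rw [hK, compProd_map_left _ (measurable_tailFin n)
      (κ.comap (fun v : Fin (n + 1) → M => v (Fin.last n)) (measurable_pi_apply _))] at key
    -- now rewrite both sides of key into the goal's shape
    have hL : (Prod.map (fun v : Fin (n + 2) → M => fun i : Fin (n + 1) => v i.succ) id) ∘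
        (fun u : ℕ → M => ((fun i : Fin (n + 2) => u i), u (n + 2)))
        = (fun u : ℕ → M => ((fun i : Fin (n + 1) => u i), u (n + 1))) ∘ shift := by
      funext u
      simp only [Function.comp, Prod.map, id, shift]
      congr 1
    have hR : (ν.map (fun u : ℕ → M => fun i : Fin (n + 2) => u i)).map
          (fun v : Fin (n + 2) → M => fun i : Fin (n + 1) => v i.succ)
        = (ν.map shift).map (fun u => fun i : Fin (n + 1) => u i) := by
      rw [Measure.map_map (measurable_tailFin n) (measurable_restr (n + 1)),
        Measure.map_map (measurable_restr n) hshift]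
      congr 1
    rw [hL, hR] at key
    rw [← Measure.map_map ((measurable_restr n).prodMk (measurable_pi_apply _)) hshift] at key
    exact key
end

section
/- Let M be a measurable space, κ a Markov kernel from M to M, and μ a probability measure invariant for κ. Let h : M → ℝ be square-integrable with respect to μ (h ∈ L²(μ)), with h ≥ 0 μ-almost everywhere, and suppose h(x) ≤ ∫ h d(κ x) for μ-almost every x. Then for μ-almost every x, h(y) = h(x) for (κ x)-almost every y; in particular h(x) = ∫ h d(κ x) for μ-almost every x. -/
open MeasureTheory ProbabilityTheory Filter
open scoped ENNReal NNReal

/-- Rigidity: a nonnegative `L²(μ)` function that is subharmonic for a Markov kernel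
with invariant probability measure `μ` is a.s. constant along one transition; in
particular it is harmonic. -/
theorem stmt5 {M : Type*} [MeasurableSpace M] (κ : Kernel M M) [IsMarkovKernel κ]
    (μ : Measure M) [IsProbabilityMeasure μ]
    (hinv : μ.bind (fun x => κ x) = μ)
    (h : M → ℝ) (hL2 : MemLp h 2 μ)
    (hpos : 0 ≤ᵐ[μ] h)
    (hsub : ∀ᵐ x ∂μ, h x ≤ ∫ y, h y ∂(κ x)) :
    (∀ᵐ x ∂μ, ∀ᵐ y ∂(κ x), h y = h x) ∧ (∀ᵐ x ∂μ, h x = ∫ y, h y ∂(κ x)) := by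
  classical
  -- measurable representative
  set g : M → ℝ := hL2.aestronglyMeasurable.mk h with hg_def
  have hgsm : StronglyMeasurable g := hL2.aestronglyMeasurable.stronglyMeasurable_mk
  have hgm : Measurable g := hgsm.measurable
  have hgh : h =ᵐ[μ] g := hL2.aestronglyMeasurable.ae_eq_mk
  have hg0 : 0 ≤ᵐ[μ] g := by filter_upwards [hpos, hgh] with x h1 h2; rw [← h2]; exact h1
  have hL2g : MemLp g 2 μ := hL2.ae_eq hgh
  have hgint : Integrable g μ := (hL2.integrable one_le_two).congr hgh
  -- invariance for lintegrals
  have key : ∀ f : M → ℝ≥0∞, Measurable f →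
      ∫⁻ x, ∫⁻ y, f y ∂(κ x) ∂μ = ∫⁻ y, f y ∂μ := by
    intro f hf
    rw [← Measure.lintegral_bind (κ.measurable.aemeasurable) hf.aemeasurable, hinv]
  -- a.e. properties transfer along the kernel
  have hker : ∀ᵐ x ∂μ, ∀ᵐ y ∂(κ x), h y = g y ∧ 0 ≤ g y := by
    have hs : μ {y | ¬ (h y = g y ∧ 0 ≤ g y)} = 0 := by
      have : ∀ᵐ y ∂μ, h y = g y ∧ 0 ≤ g y := by
        filter_upwards [hgh, hg0] with y h1 h2; exact ⟨h1, h2⟩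
      exact this
    set s := {y | ¬ (h y = g y ∧ 0 ≤ g y)} with hs_def
    set t := toMeasurable μ s with ht_def
    have htm : MeasurableSet t := measurableSet_toMeasurable μ s
    have htμ : μ t = 0 := by rw [ht_def, measure_toMeasurable]; exact hs
    have hbind : (μ.bind fun x => κ x) t = 0 := by rw [hinv]; exact htμ
    rw [Measure.bind_apply htm (κ.measurable.aemeasurable)] at hbind
    have := (lintegral_eq_zero_iff (κ.measurable_coe htm)).1 hbind
    filter_upwards [this] with x hx
    have hκs : κ x s = 0 := measure_mono_null (subset_toMeasurable μ s) hx
    have : ∀ᵐ y ∂(κ x), y ∉ s := by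
      rw [ae_iff]
      simpa using hκs
    filter_upwards [this] with y hy
    simpa [hs_def] using hy
  -- finiteness of the square integral
  have hsq : Integrable (fun x => g x ^ 2) μ := hL2g.integrable_sq
  have hA : ∫⁻ x, ENNReal.ofReal (g x ^ 2) ∂μ ≠ ∞ := by
    have := hsq.2
    rw [HasFiniteIntegral] at this
    refine ne_of_lt (lt_of_le_of_lt (le_of_eq ?_) this)
    refine lintegral_congr fun x => ?_
    rw [← Real.enorm_eq_ofReal (sq_nonneg _)]
  -- finiteness of ∫⁻ ofReal g dμ
  have hGfin : ∫⁻ x, ENNReal.ofReal (g x) ∂μ ≠ ∞ := by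
    have := hgint.2
    rw [HasFiniteIntegral] at this
    exact ne_of_lt (lt_of_le_of_lt (lintegral_mono fun x => Real.ofReal_le_enorm _) this)
  -- a.e. x, ∫⁻ ofReal g dκ x < ∞
  have hfin : ∀ᵐ x ∂μ, ∫⁻ y, ENNReal.ofReal (g y) ∂(κ x) ≠ ∞ := by
    have hmeas : Measurable fun x => ∫⁻ y, ENNReal.ofReal (g y) ∂(κ x) :=
      Measurable.lintegral_kernel_prod_right (κ := κ) (f := fun _ y => ENNReal.ofReal (g y))
        ((hgm.comp measurable_snd).ennreal_ofReal)
    have : ∫⁻ x, ∫⁻ y, ENNReal.ofReal (g y) ∂(κ x) ∂μ ≠ ∞ := by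
      rw [key _ hgm.ennreal_ofReal]; exact hGfin
    filter_upwards [ae_lt_top hmeas this] with x hx using ne_of_lt hx
  -- a.e. x, g integrable wrt κ x
  have hint : ∀ᵐ x ∂μ, Integrable g (κ x) := by
    filter_upwards [hfin, hker] with x hx hk
    refine ⟨hgsm.aestronglyMeasurable, ?_⟩
    rw [HasFiniteIntegral]
    have : ∫⁻ y, ‖g y‖ₑ ∂(κ x) = ∫⁻ y, ENNReal.ofReal (g y) ∂(κ x) := by
      refine lintegral_congr_ae ?_
      filter_upwards [hk] with y hy
      exact Real.enorm_eq_ofReal hy.2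
    rw [this]
    exact lt_top_iff_ne_top.2 hx
  -- ofReal of the kernel average equals the kernel lintegral
  have hF : ∀ᵐ x ∂μ, ENNReal.ofReal (∫ y, h y ∂(κ x)) = ∫⁻ y, ENNReal.ofReal (g y) ∂(κ x) := by
    filter_upwards [hint, hker] with x hx hk
    have he : ∫ y, h y ∂(κ x) = ∫ y, g y ∂(κ x) :=
      integral_congr_ae (hk.mono fun y hy => hy.1)
    rw [he]
    exact ofReal_integral_eq_lintegral_ofReal hx (hk.mono fun y hy => hy.2)
  have hFmeas : AEMeasurable (fun x => ENNReal.ofReal (∫ y, h y ∂(κ x))) μ := by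
    refine AEMeasurable.congr (f := fun x => ∫⁻ y, ENNReal.ofReal (g y) ∂(κ x)) ?_ ?_
    · exact (Measurable.lintegral_kernel_prod_right (κ := κ)
        (f := fun _ y => ENNReal.ofReal (g y))
        ((hgm.comp measurable_snd).ennreal_ofReal)).aemeasurable
    · filter_upwards [hF] with x hx using hx.symm
  -- the two lintegrals coincide
  have hBeq : ∫⁻ x, ENNReal.ofReal (∫ y, h y ∂(κ x)) ∂μ = ∫⁻ x, ENNReal.ofReal (h x) ∂μ := by
    rw [lintegral_congr_ae hF, key _ hgm.ennreal_ofReal]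
    refine lintegral_congr_ae ?_
    filter_upwards [hgh] with x hx
    exact congrArg ENNReal.ofReal hx.symm
  have hhfin : ∫⁻ x, ENNReal.ofReal (h x) ∂μ ≠ ∞ := by
    rw [lintegral_congr_ae (hgh.mono fun x hx => congrArg ENNReal.ofReal hx :
      (fun x => ENNReal.ofReal (h x)) =ᵐ[μ] fun x => ENNReal.ofReal (g x))]
    exact hGfin
  -- harmonicity
  have part2 : ∀ᵐ x ∂μ, h x = ∫ y, h y ∂(κ x) := by
    have hle : (fun x => ENNReal.ofReal (h x)) ≤ᵐ[μ] fun x => ENNReal.ofReal (∫ y, h y ∂(κ x)) :=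
      hsub.mono fun x hx => ENNReal.ofReal_le_ofReal hx
    have := ae_eq_of_ae_le_of_lintegral_le hle hhfin hFmeas (le_of_eq hBeq)
    filter_upwards [this, hpos, hsub] with x h1 h2 h3
    have h4 : (0:ℝ) ≤ ∫ y, h y ∂(κ x) := le_trans h2 h3
    exact (ENNReal.ofReal_eq_ofReal_iff h2 h4).1 h1
  refine ⟨?_, part2⟩
  -- a.e. x, the kernel lintegral of ofReal g is ofReal (g x)
  have hgx : ∀ᵐ x ∂μ, ∫⁻ y, ENNReal.ofReal (g y) ∂(κ x) = ENNReal.ofReal (g x) := by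
    filter_upwards [hF, part2, hgh] with x h1 h2 h3
    rw [← h1, ← h2, h3]
  -- the expansion identity
  set P : M → ℝ≥0∞ := fun x => ∫⁻ y, ENNReal.ofReal ((g y - g x) ^ 2) ∂(κ x) with hP_def
  set Q : M → ℝ≥0∞ := fun x => ∫⁻ y, ENNReal.ofReal (g y ^ 2) ∂(κ x) with hQ_def
  have hPmeas : Measurable P := by
    refine Measurable.lintegral_kernel_prod_right (κ := κ)
      (f := fun x y => ENNReal.ofReal ((g y - g x) ^ 2)) ?_
    exact (((hgm.comp measurable_snd).sub (hgm.comp measurable_fst)).pow_const 2).ennreal_ofReal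
  have hQmeas : Measurable Q :=
    Measurable.lintegral_kernel_prod_right (κ := κ)
      (f := fun _ y => ENNReal.ofReal (g y ^ 2))
      (((hgm.pow_const 2).comp measurable_snd).ennreal_ofReal)
  have hexp : ∀ᵐ x ∂μ,
      P x + ENNReal.ofReal (2 * g x ^ 2) = Q x + ENNReal.ofReal (g x ^ 2) := by
    filter_upwards [hgx, hg0, hker] with x hx hx0 hk
    replace hx0 : (0:ℝ) ≤ g x := hx0
    have hcross : ∫⁻ y, ENNReal.ofReal (2 * g x * g y) ∂(κ x) = ENNReal.ofReal (2 * g x ^ 2) := by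
      have h2x : (0:ℝ) ≤ 2 * g x := by linarith
      calc ∫⁻ y, ENNReal.ofReal (2 * g x * g y) ∂(κ x)
          = ∫⁻ y, ENNReal.ofReal (2 * g x) * ENNReal.ofReal (g y) ∂(κ x) := by
            refine lintegral_congr fun y => ?_
            rw [ENNReal.ofReal_mul h2x]
        _ = ENNReal.ofReal (2 * g x) * ∫⁻ y, ENNReal.ofReal (g y) ∂(κ x) :=
            lintegral_const_mul _ hgm.ennreal_ofReal
        _ = ENNReal.ofReal (2 * g x) * ENNReal.ofReal (g x) := by rw [hx]
        _ = ENNReal.ofReal (2 * g x ^ 2) := by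
            rw [← ENNReal.ofReal_mul h2x]; ring_nf
    have hsum : P x + ∫⁻ y, ENNReal.ofReal (2 * g x * g y) ∂(κ x)
        = Q x + ∫⁻ y, ENNReal.ofReal (g x ^ 2) ∂(κ x) := by
      rw [hP_def, hQ_def]
      simp only
      rw [← lintegral_add_left (f := fun y => ENNReal.ofReal ((g y - g x) ^ 2))
        ((((hgm.sub measurable_const).pow_const 2).ennreal_ofReal)) ,
        ← lintegral_add_left (f := fun y => ENNReal.ofReal (g y ^ 2))
          ((hgm.pow_const 2).ennreal_ofReal)]
      refine lintegral_congr_ae ?_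
      filter_upwards [hk] with y hy
      have hy0 := hy.2
      have hmul : (0:ℝ) ≤ 2 * g x * g y := mul_nonneg (by linarith) hy0
      rw [← ENNReal.ofReal_add (sq_nonneg _) hmul, ← ENNReal.ofReal_add (sq_nonneg _) (sq_nonneg _)]
      congr 1
      ring
    have hconst : ∫⁻ y, ENNReal.ofReal (g x ^ 2) ∂(κ x) = ENNReal.ofReal (g x ^ 2) := by
      rw [lintegral_const, measure_univ, mul_one]
    rw [hcross, hconst] at hsum
    exact hsum
  -- integrate the expansion
  have hQint : ∫⁻ x, Q x ∂μ = ∫⁻ x, ENNReal.ofReal (g x ^ 2) ∂μ :=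
    key _ ((hgm.pow_const 2).ennreal_ofReal)
  have h2A : ∫⁻ x, ENNReal.ofReal (2 * g x ^ 2) ∂μ = 2 * ∫⁻ x, ENNReal.ofReal (g x ^ 2) ∂μ := by
    rw [← lintegral_const_mul 2 ((hgm.pow_const 2).ennreal_ofReal)]
    refine lintegral_congr fun x => ?_
    rw [ENNReal.ofReal_mul (by norm_num : (0:ℝ) ≤ 2)]
    norm_num
  have hint_eq : ∫⁻ x, P x ∂μ + ∫⁻ x, ENNReal.ofReal (2 * g x ^ 2) ∂μ
      = ∫⁻ x, Q x ∂μ + ∫⁻ x, ENNReal.ofReal (g x ^ 2) ∂μ := by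
    rw [← lintegral_add_left hPmeas, ← lintegral_add_left hQmeas]
    exact lintegral_congr_ae hexp
  set A := ∫⁻ x, ENNReal.ofReal (g x ^ 2) ∂μ with hA_def
  rw [hQint, h2A] at hint_eq
  have hPzero : ∫⁻ x, P x ∂μ = 0 := by
    have : ∫⁻ x, P x ∂μ + 2 * A = 0 + 2 * A := by
      rw [hint_eq, zero_add, two_mul]
    exact WithTop.add_right_cancel (ENNReal.mul_ne_top (by norm_num) hA) this
  have hP0 : ∀ᵐ x ∂μ, P x = 0 := (lintegral_eq_zero_iff hPmeas).1 hPzero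
  filter_upwards [hP0, hker, hgh] with x hx hk hx2
  have hinner : ∀ᵐ y ∂(κ x), ENNReal.ofReal ((g y - g x) ^ 2) = 0 := by
    refine (lintegral_eq_zero_iff ?_).1 hx
    exact ((hgm.sub measurable_const).pow_const 2).ennreal_ofReal
  filter_upwards [hinner, hk] with y hy1 hy2
  have : (g y - g x) ^ 2 ≤ 0 := by
    by_contra hcon
    push_neg at hcon
    exact (ENNReal.ofReal_pos.2 hcon).ne' hy1
  have hgyx : g y = g x := by nlinarith [sq_nonneg (g y - g x)]
  rw [hy2.1, hgyx, hx2]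
end

section
/- Let M be a measurable space, κ a Markov kernel from M to M, and μ a probability measure invariant for κ. Call a measurable set A ⊆ M invariant if ∫_A κ x A dμ(x) = μ A. Then the collection of invariant sets contains the empty set and all of M, is closed under complementation, and is closed under countable unions. -/
open MeasureTheory ProbabilityTheory Filter

/-- A measurable set `A` is invariant for the stationary Markov system `(κ, μ)` if
`∫_A κ x A dμ(x) = μ A`. -/
def IsInvariantSet {M : Type*} [MeasurableSpace M] (κ : Kernel M M) (μ : Measure M)
    (A : Set M) : Prop :=
  MeasurableSet A ∧ ∫⁻ x in A, κ x A ∂μ = μ A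

lemma ae_one_of_invariant {M : Type*} [MeasurableSpace M] (κ : Kernel M M) [IsMarkovKernel κ]
    (μ : Measure M) [IsProbabilityMeasure μ] {A : Set M} (hA : MeasurableSet A)
    (h : ∫⁻ x in A, κ x A ∂μ = μ A) :
    ∀ᵐ x ∂(μ.restrict A), κ x A = 1 := by
  have hmeas : Measurable fun x => κ x A := κ.measurable_coe hA
  have hle : ∀ x, κ x A ≤ 1 := fun x => prob_le_one
  have hne : ∫⁻ x in A, κ x A ∂μ ≠ ⊤ := by
    rw [h]; exact measure_ne_top μ A
  have hsub : ∫⁻ x in A, (1 - κ x A) ∂μ = 0 := by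
    rw [lintegral_sub hmeas hne (Filter.Eventually.of_forall hle)]
    rw [h, setLIntegral_one, tsub_self]
  have := (lintegral_eq_zero_iff (by fun_prop : Measurable fun x => 1 - κ x A)).mp hsub
  filter_upwards [this] with x hx
  have : (1 : ENNReal) ≤ κ x A := by
    simp only [Pi.zero_apply] at hx; rwa [tsub_eq_zero_iff_le] at hx
  exact le_antisymm (hle x) this

lemma invariant_of_ae_one {M : Type*} [MeasurableSpace M] (κ : Kernel M M)
    (μ : Measure M) {A : Set M}
    (h : ∀ᵐ x ∂(μ.restrict A), κ x A = 1) :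
    ∫⁻ x in A, κ x A ∂μ = μ A := by
  rw [lintegral_congr_ae h, setLIntegral_one]

/-- The invariant sets of a stationary Markov system form a σ-algebra: they contain
`∅` and `univ`, and are closed under complements and countable unions. -/
theorem stmt6 {M : Type*} [MeasurableSpace M] (κ : Kernel M M) [IsMarkovKernel κ]
    (μ : Measure M) [IsProbabilityMeasure μ]
    (hinv : μ.bind (fun x => κ x) = μ) :
    IsInvariantSet κ μ (∅ : Set M) ∧
    IsInvariantSet κ μ (Set.univ : Set M) ∧
    (∀ A : Set M, IsInvariantSet κ μ A → IsInvariantSet κ μ Aᶜ) ∧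
    (∀ A : ℕ → Set M, (∀ n, IsInvariantSet κ μ (A n)) →
      IsInvariantSet κ μ (⋃ n, A n)) := by
  have hstat : ∀ {A : Set M}, MeasurableSet A → ∫⁻ x, κ x A ∂μ = μ A := by
    intro A hA
    nth_rewrite 2 [← hinv]
    rw [Measure.bind_apply hA κ.measurable.aemeasurable]
  refine ⟨⟨MeasurableSet.empty, by simp⟩, ⟨MeasurableSet.univ, by simp⟩, ?_, ?_⟩
  · rintro A ⟨hA, hAi⟩
    refine ⟨hA.compl, ?_⟩
    have hmeas : Measurable fun x => κ x A := κ.measurable_coe hA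
    -- ∫_{Aᶜ} κ x A = 0
    have hsplit := lintegral_add_compl (fun x => κ x A) hA (μ := μ)
    rw [hstat hA, hAi] at hsplit
    have hzero : ∫⁻ x in Aᶜ, κ x A ∂μ = 0 := by
      have h0 : μ A + ∫⁻ x in Aᶜ, κ x A ∂μ = μ A + 0 := by rw [hsplit, add_zero]
      exact (ENNReal.add_right_inj (measure_ne_top μ A)).mp h0
    have hcompl : ∀ x, κ x Aᶜ = 1 - κ x A := fun x => prob_compl_eq_one_sub hA
    calc ∫⁻ x in Aᶜ, κ x Aᶜ ∂μ = ∫⁻ x in Aᶜ, (1 - κ x A) ∂μ := by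
          exact lintegral_congr fun x => hcompl x
      _ = ∫⁻ _ in Aᶜ, (1 : ENNReal) ∂μ - ∫⁻ x in Aᶜ, κ x A ∂μ := by
          rw [lintegral_sub hmeas (by rw [hzero]; exact ENNReal.zero_ne_top)
            (Filter.Eventually.of_forall fun x => prob_le_one)]
      _ = μ Aᶜ := by rw [setLIntegral_one, hzero, tsub_zero]
  · intro A hAs
    have hA : ∀ n, MeasurableSet (A n) := fun n => (hAs n).1
    have hU : MeasurableSet (⋃ n, A n) := MeasurableSet.iUnion hA
    refine ⟨hU, invariant_of_ae_one κ μ ?_⟩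
    rw [ae_restrict_iUnion_iff]
    intro n
    have h1 := ae_one_of_invariant κ μ (hA n) (hAs n).2
    filter_upwards [h1] with x hx
    have hle : κ x (A n) ≤ κ x (⋃ n, A n) := measure_mono (Set.subset_iUnion A n)
    exact le_antisymm prob_le_one (hx ▸ hle)
end

section
/- (Proposition 4.1, convergence of standard DMD for random systems.) Let M be a measurable space, κ a Markov kernel from M to M, μ a probability measure invariant for κ, ν the path measure on ℕ → M of the chain started from μ, and S the shift on paths; assume S is ergodic with respect to ν. Let f : Fin k → (M → ℂ) be measurable functions, each square-integrable with respect to μ and linearly independent in L²(μ), and suppose there is a matrix K : Matrix (Fin k) (Fin k) ℂ such that for μ-almost every x and every i, ∫ f i d(κ x) = Σ_j K i j · f j (x) (the span of the f i is an invariant subspace of the stochastic Koopman operator with matrix K). For a path u and n ≥ 1, define the k × k matrices G₀(n,u) with entries (1/n) Σ_{m=0}^{n−1} f i (u m) · conj(f j (u m)) and G₁(n,u) with entries (1/n) Σ_{m=0}^{n−1} f i (u (m+1)) · conj(f j (u m)). Then for ν-almost every path u: G₀(n,u) is invertible for all sufficiently large n, and G₁(n,u) · (G₀(n,u))⁻¹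 converges to K as n → ∞. -/
open MeasureTheory ProbabilityTheory Filter

set_option linter.unusedSectionVars false

section Aux

section Birkhoff
variable {X : Type*} [MeasurableSpace X] {T : X → X} {ν : Measure X} {g : X → ℝ}

lemma measurable_birkhoffSum (hT : Measurable T) (hg : Measurable g) (n : ℕ) :
    Measurable (birkhoffSum T g n) :=
  Finset.measurable_sum _ fun m _ => hg.comp (hT.iterate m)

lemma integrable_comp_iterate (hT : MeasurePreserving T ν ν) (hg : Integrable g ν) (m : ℕ) :
    Integrable (fun x => g (T^[m] x)) ν := by
  rw [← memLp_one_iff_integrable] at hg ⊢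
  exact hg.comp_measurePreserving (hT.iterate m)

lemma integrable_birkhoffSum (hT : MeasurePreserving T ν ν) (hg : Integrable g ν) (n : ℕ) :
    Integrable (birkhoffSum T g n) ν := by
  have : birkhoffSum T g n = fun x => ∑ m ∈ Finset.range n, g (T^[m] x) := rfl
  rw [this]
  exact integrable_finset_sum _ fun m _ => integrable_comp_iterate hT hg m

noncomputable def maxS (T : X → X) (g : X → ℝ) : ℕ → X → ℝ
  | 0 => fun _ => 0
  | (N+1) => fun x => max (maxS T g N x) (birkhoffSum T g (N+1) x)

lemma maxS_nonneg (N : ℕ) (x : X) : 0 ≤ maxS T g N x := by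
  induction N with
  | zero => exact le_refl _
  | succ N ih => exact le_max_of_le_left ih

lemma birkhoffSum_le_maxS {k N : ℕ} (h : k ≤ N) (x : X) :
    birkhoffSum T g k x ≤ maxS T g N x := by
  induction N with
  | zero =>
    interval_cases k
    simp [maxS, birkhoffSum_zero]
  | succ N ih =>
    rcases Nat.lt_or_ge k (N+1) with h' | h'
    · exact le_max_of_le_left (ih (Nat.lt_succ_iff.mp h'))
    · have : k = N + 1 := le_antisymm h h'
      subst this
      exact le_max_right _ _

lemma maxS_exists (N : ℕ) (x : X) : ∃ k ≤ N, maxS T g N x = birkhoffSum T g k x := by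
  induction N with
  | zero => exact ⟨0, le_refl _, by simp [maxS, birkhoffSum_zero]⟩
  | succ N ih =>
    obtain ⟨k, hk, hke⟩ := ih
    rcases le_total (birkhoffSum T g (N+1) x) (maxS T g N x) with h1 | h1
    · exact ⟨k, hk.trans (Nat.le_succ N), by show max _ _ = _; rw [max_eq_left h1, hke]⟩
    · exact ⟨N+1, le_refl _, by show max _ _ = _; rw [max_eq_right h1]⟩

lemma maxS_measurable (hT : Measurable T) (hg : Measurable g) (N : ℕ) :
    Measurable (maxS T g N) := by
  induction N with
  | zero => exact measurable_const
  | succ N ih => exact ih.max (measurable_birkhoffSum hT hg (N+1))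

lemma maxS_integrable (hT : MeasurePreserving T ν ν) (hg : Integrable g ν) (N : ℕ) :
    Integrable (maxS T g N) ν := by
  induction N with
  | zero => exact integrable_zero X ℝ ν
  | succ N ih =>
    have := ih.sup (integrable_birkhoffSum hT hg (N+1))
    exact this.congr (ae_of_all _ fun x => rfl)

lemma maxS_key (N : ℕ) (x : X) (hx : 0 < maxS T g N x) :
    maxS T g N x ≤ g x + maxS T g N (T x) := by
  obtain ⟨k, hk, hke⟩ := maxS_exists (T := T) (g := g) N x
  match k with
  | 0 => rw [hke, birkhoffSum_zero] at hx; exact absurd hx (lt_irrefl 0)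
  | (m+1) =>
    rw [hke, birkhoffSum_succ']
    have : birkhoffSum T g m (T x) ≤ maxS T g N (T x) :=
      birkhoffSum_le_maxS (le_trans (Nat.le_succ m) hk) (T x)
    linarith
end Birkhoff


section MaxErg
variable {X : Type*} [MeasurableSpace X] {T : X → X} {ν : Measure X} {g : X → ℝ}

theorem maximal_ergodic (hT : MeasurePreserving T ν ν) [IsProbabilityMeasure ν]
    (hgm : Measurable g) (hg : Integrable g ν) :
    0 ≤ ∫ x in {x | ∃ n, 0 < birkhoffSum T g n x}, g x ∂ν := by
  set E : ℕ → Set X := fun N => {x | 0 < maxS T g N x} with hE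
  have hEmeas : ∀ N, MeasurableSet (E N) := fun N =>
    measurableSet_lt measurable_const (maxS_measurable hT.measurable hgm N)
  have hint : ∀ N, Integrable (maxS T g N) ν := maxS_integrable hT hg
  have hintT : ∀ N, Integrable (fun x => maxS T g N (T x)) ν := by
    intro N
    exact memLp_one_iff_integrable.mp
      ((memLp_one_iff_integrable.mpr (hint N)).comp_measurePreserving hT)
  -- Step 1 : each ∫_{E N} g ≥ 0
  have step1 : ∀ N, 0 ≤ ∫ x in E N, g x ∂ν := by
    intro N
    have hmono : ∫ x in E N, (maxS T g N x - maxS T g N (T x)) ∂ν ≤ ∫ x in E N, g x ∂ν := by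
      refine setIntegral_mono_on (((hint N).sub (hintT N)).integrableOn) hg.integrableOn
        (hEmeas N) ?_
      intro x hx
      have := maxS_key (T := T) (g := g) N x hx
      linarith
    have hsplit : ∫ x in E N, (maxS T g N x - maxS T g N (T x)) ∂ν
        = ∫ x in E N, maxS T g N x ∂ν - ∫ x in E N, maxS T g N (T x) ∂ν :=
      integral_sub (hint N).integrableOn (hintT N).integrableOn
    have h1 : ∫ x in E N, maxS T g N x ∂ν = ∫ x, maxS T g N x ∂ν := by
      have hcompl : ∫ x in (E N)ᶜ, maxS T g N x ∂ν = 0 := by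
        rw [setIntegral_congr_fun (hEmeas N).compl (g := fun _ => (0:ℝ)) ?_, integral_zero]
        intro x hx
        have h0 : ¬ 0 < maxS T g N x := hx
        exact le_antisymm (not_lt.mp h0) (maxS_nonneg N x)
      have := integral_add_compl (hEmeas N) (hint N)
      rw [hcompl] at this
      linarith
    have h2 : ∫ x in E N, maxS T g N (T x) ∂ν ≤ ∫ x, maxS T g N (T x) ∂ν :=
      setIntegral_le_integral (hintT N) (ae_of_all _ fun x => maxS_nonneg N (T x))
    have h3 : ∫ x, maxS T g N (T x) ∂ν = ∫ x, maxS T g N x ∂ν := by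
      rw [← integral_map hT.measurable.aemeasurable
        (maxS_measurable hT.measurable hgm N).aestronglyMeasurable, hT.map_eq]
    rw [hsplit] at hmono
    rw [h3] at h2
    linarith
  -- Step 2 : monotone union
  have hmono : Monotone E := by
    intro a b hab x hx
    have h1 : maxS T g a x ≤ maxS T g b x := by
      obtain ⟨k, hk, hke⟩ := maxS_exists (T := T) (g := g) a x
      rw [hke]
      exact birkhoffSum_le_maxS (hk.trans hab) x
    exact lt_of_lt_of_le hx h1
  have hunion : (⋃ N, E N) = {x | ∃ n, 0 < birkhoffSum T g n x} := by
    ext x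
    simp only [Set.mem_iUnion, Set.mem_setOf_eq, hE]
    constructor
    · rintro ⟨N, hN⟩
      obtain ⟨k, _, hke⟩ := maxS_exists (T := T) (g := g) N x
      exact ⟨k, hke ▸ hN⟩
    · rintro ⟨n, hn⟩
      exact ⟨n, lt_of_lt_of_le hn (birkhoffSum_le_maxS (le_refl n) x)⟩
  have htends := tendsto_setIntegral_of_monotone hEmeas hmono hg.integrableOn
  rw [hunion] at htends
  exact ge_of_tendsto htends (Eventually.of_forall step1)
end MaxErg

section HalfBirkhoff
variable {X : Type*} [MeasurableSpace X] {T : X → X} {ν : Measure X} {g : X → ℝ}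

lemma birkhoffSum_sub_const (T : X → X) (g : X → ℝ) (c : ℝ) (n : ℕ) (x : X) :
    birkhoffSum T (fun y => g y - c) n x = birkhoffSum T g n x - n * c := by
  simp [birkhoffSum, Finset.sum_sub_distrib, mul_comm]

lemma birkhoffSum_neg' (T : X → X) (g : X → ℝ) (n : ℕ) (x : X) :
    birkhoffSum T (fun y => -g y) n x = -birkhoffSum T g n x := by
  simp [birkhoffSum]

theorem birkhoff_half (herg : Ergodic T ν) [IsProbabilityMeasure ν]
    (hgm : Measurable g) (hg : Integrable g ν) {α : ℝ} (hα : ∫ x, g x ∂ν < α) :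
    ∀ᵐ x ∂ν, ∀ᶠ n in atTop, birkhoffSum T g n x ≤ α * n := by
  set c : ℕ → ℝ := fun k => α - 1/(k+1) with hc
  have hcmono : ∀ k, c k < c (k+1) := by
    intro k
    have h1 : (0:ℝ) < k + 1 := by positivity
    have h2 : (0:ℝ) < k + 2 := by positivity
    have h3 : (1:ℝ) / (↑(k+1)+1) < 1 / (↑k+1) :=
      one_div_lt_one_div_of_lt h1 (by push_cast; linarith)
    rw [hc]
    simp only
    linarith
  set C : Set X := {x | ∀ k : ℕ, ∃ᶠ n in atTop, c k * n < birkhoffSum T g n x} with hC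
  -- exact invariance
  have hCinv : T ⁻¹' C = C := by
    ext x
    simp only [Set.mem_preimage, hC, Set.mem_setOf_eq]
    constructor
    · -- T x ∈ C → x ∈ C
      intro hx k
      have hk := hx (k+1)
      set d : ℝ := c (k+1) - c k with hd
      have hdpos : 0 < d := sub_pos.mpr (hcmono k)
      obtain ⟨N₀, hN₀⟩ := exists_nat_ge ((|c (k+1)| + |g x|) / d)
      rw [frequently_atTop] at hk ⊢
      intro N
      obtain ⟨n, hn, hnp⟩ := hk (max N N₀)
      refine ⟨n + 1, le_trans (le_max_left N N₀) (le_trans hn (Nat.le_succ n)), ?_⟩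
      have hnN₀ : (N₀ : ℝ) ≤ n := by exact_mod_cast le_trans (le_max_right N N₀) hn
      have hsucc : birkhoffSum T g (n+1) x = g x + birkhoffSum T g n (T x) :=
        birkhoffSum_succ' T g n x
      have hdn : (|c (k+1)| + |g x|) ≤ d * n := by
        rw [div_le_iff₀ hdpos] at hN₀
        calc (|c (k+1)| + |g x|) ≤ N₀ * d := hN₀
        _ = d * N₀ := mul_comm _ _
        _ ≤ d * n := by
          apply mul_le_mul_of_nonneg_left hnN₀ hdpos.le
      have habs1 : c (k+1) ≤ |c (k+1)| := le_abs_self _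
      have habs2 : -|g x| ≤ g x := neg_abs_le _
      have : c k * (n+1 : ℕ) = c (k+1) * n - d * n + c k := by push_cast; rw [hd]; ring
      rw [this, hsucc]
      have := hnp
      nlinarith [this]
    · -- x ∈ C → T x ∈ C
      intro hx k
      have hk := hx (k+1)
      set d : ℝ := c (k+1) - c k with hd
      have hdpos : 0 < d := sub_pos.mpr (hcmono k)
      obtain ⟨N₀, hN₀⟩ := exists_nat_ge ((|c (k+1)| + |g x|) / d)
      rw [frequently_atTop] at hk ⊢
      intro N
      obtain ⟨m, hm, hmp⟩ := hk (max (N+1) (N₀+1))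
      have hm1 : 1 ≤ m := le_trans (le_trans (Nat.le_add_left 1 N) (le_max_left _ _)) hm
      obtain ⟨n, rfl⟩ : ∃ n, m = n + 1 := ⟨m - 1, (Nat.succ_pred_eq_of_pos hm1).symm⟩
      refine ⟨n, by omega, ?_⟩
      have hnN₀ : (N₀ : ℝ) ≤ n := by
        have : N₀ + 1 ≤ n + 1 := le_trans (le_max_right _ _) hm
        exact_mod_cast Nat.le_of_succ_le_succ this
      have hsucc : birkhoffSum T g (n+1) x = g x + birkhoffSum T g n (T x) :=
        birkhoffSum_succ' T g n x
      have hdn : (|c (k+1)| + |g x|) ≤ d * n := by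
        rw [div_le_iff₀ hdpos] at hN₀
        calc (|c (k+1)| + |g x|) ≤ N₀ * d := hN₀
        _ = d * N₀ := mul_comm _ _
        _ ≤ d * n := by apply mul_le_mul_of_nonneg_left hnN₀ hdpos.le
      have habs2 : g x ≤ |g x| := le_abs_self _
      have hneg1 : -|c (k+1)| ≤ c (k+1) := neg_abs_le _
      have hexp : c (k+1) * ((n:ℝ)+1) = c (k+1) * n + c (k+1) := by ring
      have hmp' : c (k+1) * ((n:ℝ)+1) < g x + birkhoffSum T g n (T x) := by
        rw [← hsucc]; exact_mod_cast hmp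
      have hkey : c k * (n:ℝ) = c (k+1) * n - d * n := by rw [hd]; ring
      rw [hkey]
      by_contra hcon
      rw [not_lt] at hcon
      linarith
  have hCmeas : MeasurableSet C := by
    have : C = ⋂ (k : ℕ), ⋂ (N : ℕ), ⋃ (n : ℕ), ⋃ (_ : n ≥ N),
        {x | c k * n < birkhoffSum T g n x} := by
      ext x
      simp only [hC, Set.mem_setOf_eq, Set.mem_iInter, Set.mem_iUnion, frequently_atTop,
        ge_iff_le, exists_prop]
    rw [this]
    refine MeasurableSet.iInter fun k => MeasurableSet.iInter fun N =>
      MeasurableSet.iUnion fun n => MeasurableSet.iUnion fun _ =>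
      measurableSet_lt measurable_const (measurable_birkhoffSum herg.measurable hgm n)
  rcases herg.toPreErgodic.ae_empty_or_univ hCmeas hCinv with h0 | h1
  · -- ν C = 0 : conclusion
    have h0' : ∀ᵐ x ∂ν, x ∉ C := by
      have := ae_eq_empty.mp h0
      rw [ae_iff]
      simpa using this
    filter_upwards [h0'] with x hx
    rw [hC, Set.mem_setOf_eq] at hx
    push_neg at hx
    obtain ⟨k, hk⟩ := hx
    filter_upwards [hk] with n hn
    calc birkhoffSum T g n x ≤ c k * n := hn
    _ ≤ α * n := by
      apply mul_le_mul_of_nonneg_right _ (Nat.cast_nonneg n)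
      rw [hc]
      simp only
      have : (0:ℝ) < 1/(k+1) := by positivity
      linarith
  · -- ν C = 1 : contradiction with the maximal ergodic theorem
    exfalso
    obtain ⟨k₀, hk₀⟩ := exists_nat_one_div_lt (sub_pos.mpr hα)
    have hck₀ : ∫ x, g x ∂ν < c k₀ := by
      rw [hc]; simp only; push_cast at hk₀ ⊢; linarith
    set g' : X → ℝ := fun y => g y - c k₀ with hg'
    have hg'm : Measurable g' := hgm.sub measurable_const
    have hg'i : Integrable g' ν := hg.sub (integrable_const _)
    have hmax := maximal_ergodic herg.toMeasurePreserving hg'm hg'i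
    set E : Set X := {x | ∃ n, 0 < birkhoffSum T g' n x} with hEdef
    have hEmeas : MeasurableSet E := by
      have : E = ⋃ n, {x | 0 < birkhoffSum T g' n x} := by ext x; simp [hEdef]
      rw [this]
      exact MeasurableSet.iUnion fun n => measurableSet_lt measurable_const
        (measurable_birkhoffSum herg.measurable hg'm n)
    have hCsub : ∀ x ∈ C, x ∈ E := by
      intro x hx
      obtain ⟨n, hn⟩ := (hx k₀).exists
      rw [mul_comm] at hn
      refine ⟨n, ?_⟩
      rw [hg', birkhoffSum_sub_const]
      linarith
    have hE1 : ν Eᶜ = 0 := by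
      have h1' := ae_eq_univ.mp h1
      exact measure_mono_null (Set.compl_subset_compl.mpr (fun x hx => hCsub x hx)) h1'
    have hsplit := integral_add_compl hEmeas hg'i
    have hzero : ∫ x in Eᶜ, g' x ∂ν = 0 := by
      rw [Measure.restrict_eq_zero.mpr hE1, integral_zero_measure]
    have heq : ∫ x in E, g' x ∂ν = ∫ x, g' x ∂ν := by rw [← hsplit, hzero, add_zero]
    have hneg : ∫ x, g' x ∂ν < 0 := by
      rw [hg']
      rw [integral_sub hg (integrable_const _), integral_const]
      simp only [probReal_univ, smul_eq_mul, one_mul]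
      linarith
    rw [heq] at hmax
    linarith
end HalfBirkhoff

section BirkhoffMain
variable {X : Type*} [MeasurableSpace X] {T : X → X} {ν : Measure X}

theorem birkhoff_ae (herg : Ergodic T ν) [IsProbabilityMeasure ν] {g : X → ℝ}
    (hgm : Measurable g) (hg : Integrable g ν) :
    ∀ᵐ x ∂ν, Tendsto (fun n : ℕ => (n:ℝ)⁻¹ * birkhoffSum T g n x) atTop
      (nhds (∫ x, g x ∂ν)) := by
  have hup : ∀ᵐ x ∂ν, ∀ q : ℚ, (∫ x, g x ∂ν < q) →
      ∀ᶠ n in atTop, birkhoffSum T g n x ≤ q * n := by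
    rw [ae_all_iff]
    intro q
    by_cases hq : ∫ x, g x ∂ν < q
    · filter_upwards [birkhoff_half herg hgm hg hq] with x hx using fun _ => hx
    · exact ae_of_all _ fun x h => absurd h hq
  have hdown : ∀ᵐ x ∂ν, ∀ q : ℚ, (∫ x, (-g x) ∂ν < q) →
      ∀ᶠ n in atTop, -birkhoffSum T g n x ≤ q * n := by
    rw [ae_all_iff]
    intro q
    by_cases hq : ∫ x, (-g x) ∂ν < q
    · have := birkhoff_half herg hgm.neg hg.neg (g := fun y => -g y) hq
      filter_upwards [this] with x hx
      intro _
      filter_upwards [hx] with n hn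
      rw [birkhoffSum_neg'] at hn
      exact hn
    · exact ae_of_all _ fun x h => absurd h hq
  filter_upwards [hup, hdown] with x h1 h2
  rw [Metric.tendsto_atTop]
  intro ε hε
  set I := ∫ x, g x ∂ν with hI
  obtain ⟨q, hq1, hq2⟩ := exists_rat_btwn (lt_add_of_pos_right I hε)
  have hnegI : ∫ x, (-g x) ∂ν = -I := by rw [integral_neg]
  obtain ⟨q', hq1', hq2'⟩ := exists_rat_btwn (lt_add_of_pos_right (-I) hε)
  have e1 := h1 q hq1
  have e2 := h2 q' (by rw [hnegI]; exact hq1')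
  rw [eventually_atTop] at e1 e2
  obtain ⟨N₁, hN₁⟩ := e1
  obtain ⟨N₂, hN₂⟩ := e2
  refine ⟨max (max N₁ N₂) 1, fun n hn => ?_⟩
  have hn1 : 1 ≤ n := le_trans (le_max_right _ _) hn
  have hnN₁ : N₁ ≤ n := le_trans (le_trans (le_max_left _ _) (le_max_left _ _)) hn
  have hnN₂ : N₂ ≤ n := le_trans (le_trans (le_max_right _ _) (le_max_left _ _)) hn
  have hnpos : (0:ℝ) < n := by exact_mod_cast hn1
  have hb1 : birkhoffSum T g n x ≤ q * n := hN₁ n hnN₁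
  have hb2 : -birkhoffSum T g n x ≤ q' * n := hN₂ n hnN₂
  have hub : (n:ℝ)⁻¹ * birkhoffSum T g n x ≤ q := by
    have h := mul_le_mul_of_nonneg_left hb1 (inv_nonneg.mpr hnpos.le)
    have h2 : (n:ℝ)⁻¹ * ((q:ℝ) * n) = q := by field_simp
    linarith
  have hlb : -(q':ℝ) ≤ (n:ℝ)⁻¹ * birkhoffSum T g n x := by
    have h := mul_le_mul_of_nonneg_left hb2 (inv_nonneg.mpr hnpos.le)
    have h2 : (n:ℝ)⁻¹ * ((q':ℝ) * n) = q' := by field_simp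
    have h3 : (n:ℝ)⁻¹ * (-birkhoffSum T g n x) = -((n:ℝ)⁻¹ * birkhoffSum T g n x) := by ring
    linarith
  rw [Real.dist_eq, abs_sub_lt_iff]
  constructor
  · have : (q:ℝ) < I + ε := by exact_mod_cast hq2
    linarith
  · have : (q':ℝ) < -I + ε := by exact_mod_cast hq2'
    linarith

theorem birkhoff_ae_complex (herg : Ergodic T ν) [IsProbabilityMeasure ν] {g : X → ℂ}
    (hgm : Measurable g) (hg : Integrable g ν) :
    ∀ᵐ x ∂ν, Tendsto (fun n : ℕ => (1 / (n:ℂ)) * ∑ m ∈ Finset.range n, g (T^[m] x)) atTop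
      (nhds (∫ x, g x ∂ν)) := by
  set gre : X → ℝ := fun x => (g x).re with hgre
  set gim : X → ℝ := fun x => (g x).im with hgim
  have hre := birkhoff_ae herg (Complex.measurable_re.comp hgm) hg.re
  have him := birkhoff_ae herg (Complex.measurable_im.comp hgm) hg.im
  filter_upwards [hre, him] with x h1 h2
  have key : ∀ n : ℕ, (1 / (n:ℂ)) * ∑ m ∈ Finset.range n, g (T^[m] x)
      = ((((n:ℝ)⁻¹ * birkhoffSum T gre n x : ℝ) : ℂ)
        + (((n:ℝ)⁻¹ * birkhoffSum T gim n x : ℝ) : ℂ) * Complex.I) := by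
    intro n
    have hsum : ∑ m ∈ Finset.range n, g (T^[m] x)
        = ((birkhoffSum T gre n x : ℝ) : ℂ) + ((birkhoffSum T gim n x : ℝ) : ℂ) * Complex.I := by
      rw [birkhoffSum, birkhoffSum]
      push_cast
      rw [Finset.sum_mul, ← Finset.sum_add_distrib]
      refine Finset.sum_congr rfl fun m _ => ?_
      exact (Complex.re_add_im _).symm
    rw [hsum]
    push_cast
    ring
  have hlim : Tendsto (fun n : ℕ =>
      ((((n:ℝ)⁻¹ * birkhoffSum T gre n x : ℝ) : ℂ)
        + (((n:ℝ)⁻¹ * birkhoffSum T gim n x : ℝ) : ℂ) * Complex.I)) atTop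
      (nhds (((∫ x, gre x ∂ν : ℝ) : ℂ) + ((∫ x, gim x ∂ν : ℝ) : ℂ) * Complex.I)) := by
    refine Tendsto.add ?_ (Tendsto.mul_const _ ?_)
    · exact (Complex.continuous_ofReal.tendsto _).comp h1
    · exact (Complex.continuous_ofReal.tendsto _).comp h2
  have hre' : ∫ x, (g x).re ∂ν = (∫ x, g x ∂ν).re := by
    simpa using Complex.reCLM.integral_comp_comm hg
  have him' : ∫ x, (g x).im ∂ν = (∫ x, g x ∂ν).im := by
    simpa using Complex.imCLM.integral_comp_comm hg
  have hintegral : ∫ x, g x ∂ν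
      = ((∫ x, gre x ∂ν : ℝ) : ℂ) + ((∫ x, gim x ∂ν : ℝ) : ℂ) * Complex.I := by
    calc ∫ x, g x ∂ν
        = ((∫ x, g x ∂ν).re : ℂ) + ((∫ x, g x ∂ν).im : ℂ) * Complex.I :=
          (Complex.re_add_im _).symm
    _ = _ := by rw [← hre', ← him']
  rw [hintegral]
  exact hlim.congr (fun n => (key n).symm)
end BirkhoffMain

section L2Helpers
open scoped ENNReal NNReal
variable {α : Type*} [MeasurableSpace α] {μ : Measure α}

lemma memL2_conj {f : α → ℂ} (hf : MemLp f 2 μ) :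
    MemLp (fun x => (starRingEnd ℂ) (f x)) 2 μ := by
  have hm : AEStronglyMeasurable (fun x => (starRingEnd ℂ) (f x)) μ :=
    continuous_star.comp_aestronglyMeasurable hf.1
  refine hf.of_le hm (ae_of_all _ fun x => ?_)
  simp [RCLike.norm_conj]

lemma integrable_sq_norm {f : α → ℂ} (hf : MemLp f 2 μ) :
    Integrable (fun x => ‖f x‖^2) μ := by
  have h := hf.integrable_norm_rpow two_ne_zero ENNReal.ofNat_ne_top
  refine h.congr (ae_of_all _ fun x => ?_)
  show ‖f x‖ ^ (ENNReal.toReal 2) = ‖f x‖ ^ (2:ℕ)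
  rw [show ENNReal.toReal 2 = (2:ℝ) by simp, ← Real.rpow_natCast (‖f x‖) 2]
  norm_num

lemma integrable_mul_L2 {f g : α → ℂ} (hf : MemLp f 2 μ) (hg : MemLp g 2 μ) :
    Integrable (fun x => f x * g x) μ := by
  refine Integrable.mono' ((integrable_sq_norm hf).add (integrable_sq_norm hg))
    (hf.1.mul hg.1) (ae_of_all _ fun x => ?_)
  simp only [Pi.add_apply]
  rw [norm_mul]
  nlinarith [sq_nonneg (‖f x‖ - ‖g x‖), norm_nonneg (f x), norm_nonneg (g x),
    mul_nonneg (norm_nonneg (f x)) (norm_nonneg (g x))]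

lemma tendsto_matrix_of_entries {k : ℕ} {F : ℕ → Matrix (Fin k) (Fin k) ℂ}
    {A : Matrix (Fin k) (Fin k) ℂ}
    (h : ∀ i j, Tendsto (fun n => F n i j) atTop (nhds (A i j))) :
    Tendsto F atTop (nhds A) :=
  tendsto_pi_nhds.mpr fun i => tendsto_pi_nhds.mpr fun j => h i j
end L2Helpers

end Aux

/-- Proposition 4.1: convergence of standard DMD (Algorithm 1) for an ergodic random
dynamical system, when the observables span an invariant subspace of the stochastic
Koopman operator with matrix `K`. -/
theorem stmt8 {M : Type*} [MeasurableSpace M] (κ : Kernel M M) [IsMarkovKernel κ]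
    (μ : Measure M) [IsProbabilityMeasure μ]
    (hinv : μ.bind (fun x => κ x) = μ)
    (ν : Measure (ℕ → M)) (hν : IsPathMeasure κ μ ν)
    (herg : Ergodic (shift : (ℕ → M) → ℕ → M) ν)
    (k : ℕ) (hk : 1 ≤ k) (f : Fin k → M → ℂ)
    (hmeas : ∀ i, Measurable (f i)) (hL2 : ∀ i, MemLp (f i) 2 μ)
    (hindep : ∀ c : Fin k → ℂ, (∀ᵐ x ∂μ, ∑ i, c i * f i x = 0) → c = 0)
    (K : Matrix (Fin k) (Fin k) ℂ)
    (hK : ∀ᵐ x ∂μ, ∀ i, ∫ y, f i y ∂(κ x) = ∑ j, K i j * f j x)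
    (G₀ G₁ : ℕ → (ℕ → M) → Matrix (Fin k) (Fin k) ℂ)
    (hG₀ : G₀ = fun (n : ℕ) (u : ℕ → M) => Matrix.of fun i j =>
      (1 / (n : ℂ)) * ∑ m ∈ Finset.range n, f i (u m) * (starRingEnd ℂ) (f j (u m)))
    (hG₁ : G₁ = fun (n : ℕ) (u : ℕ → M) => Matrix.of fun i j =>
      (1 / (n : ℂ)) * ∑ m ∈ Finset.range n, f i (u (m + 1)) * (starRingEnd ℂ) (f j (u m))) :
    ∀ᵐ u ∂ν,
      (∀ᶠ n in atTop, IsUnit (G₀ n u)) ∧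
      Tendsto (fun n : ℕ => G₁ n u * (G₀ n u)⁻¹) atTop (nhds K) := by
  classical
  obtain ⟨hνprob, hν0, hνn⟩ := hν
  haveI : IsProbabilityMeasure ν := hνprob
  have hTm : Measurable (shift : (ℕ → M) → ℕ → M) := herg.toMeasurePreserving.measurable
  have hmap_shift : ν.map shift = ν := herg.toMeasurePreserving.map_eq
  have heval : ∀ m : ℕ, Measurable (fun u : ℕ → M => u m) := fun m => measurable_pi_apply m
  -- iterates of the shift
  have hiter : ∀ (m : ℕ) (u : ℕ → M) (l : ℕ), (shift^[m] u) l = u (l + m) := by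
    intro m
    induction m with
    | zero => intro u l; simp
    | succ m ih =>
      intro u l
      rw [Function.iterate_succ_apply, ih (shift u) l]
      rfl
  -- the law of each coordinate is μ
  have hlaw : ∀ m : ℕ, ν.map (fun u => u m) = μ := by
    intro m
    induction m with
    | zero => exact hν0
    | succ m ih =>
      have hcomp : (fun u : ℕ → M => u (m+1)) = (fun u : ℕ → M => u m) ∘ shift := rfl
      rw [hcomp, ← Measure.map_map (heval m) hTm, hmap_shift, ih]
  -- conjugates
  have hconjmeas : ∀ j, Measurable (fun x => (starRingEnd ℂ) (f j x)) :=
    fun j => continuous_star.measurable.comp (hmeas j)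
  -- integrability of squares of coordinates
  have hIntSq : ∀ (i : Fin k) (m : ℕ), Integrable (fun u : ℕ → M => ‖f i (u m)‖^2) ν := by
    intro i m
    have h1 : Integrable (fun x => ‖f i x‖^2) μ := integrable_sq_norm (hL2 i)
    rw [← hlaw m] at h1
    exact (integrable_map_measure ((hmeas i).norm.pow_const 2).aestronglyMeasurable
      (heval m).aemeasurable).mp h1
  -- integrability of cross products on path space
  have hIntPair : ∀ (i j : Fin k) (a b : ℕ),
      Integrable (fun u : ℕ → M => f i (u a) * (starRingEnd ℂ) (f j (u b))) ν := by
    intro i j a b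
    refine Integrable.mono' ((hIntSq i a).add (hIntSq j b))
      ((((hmeas i).comp (heval a)).mul (continuous_star.measurable.comp ((hmeas j).comp (heval b)))).aestronglyMeasurable)
      (ae_of_all _ fun u => ?_)
    simp only [Pi.add_apply]
    rw [norm_mul, RCLike.norm_conj]
    nlinarith [sq_nonneg (‖f i (u a)‖ - ‖f j (u b)‖), norm_nonneg (f i (u a)),
      norm_nonneg (f j (u b)), mul_nonneg (norm_nonneg (f i (u a))) (norm_nonneg (f j (u b)))]
  -- integrability of products on M
  have hprodint : ∀ (l j : Fin k), Integrable (fun x => f l x * (starRingEnd ℂ) (f j x)) μ :=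
    fun l j => integrable_mul_L2 (hL2 l) (memL2_conj (hL2 j))
  -- the Gram matrix
  set Gmat : Matrix (Fin k) (Fin k) ℂ :=
    Matrix.of (fun i j => ∫ x, f i x * (starRingEnd ℂ) (f j x) ∂μ) with hGmat
  -- G₀ entries converge a.e. to Gmat entries
  have hG0entry : ∀ (i j : Fin k), ∀ᵐ u ∂ν,
      Tendsto (fun n : ℕ => (1 / (n:ℂ)) * ∑ m ∈ Finset.range n,
        f i (u m) * (starRingEnd ℂ) (f j (u m))) atTop (nhds (Gmat i j)) := by
    intro i j
    have hgm : Measurable (fun u : ℕ → M => f i (u 0) * (starRingEnd ℂ) (f j (u 0))) :=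
      ((hmeas i).comp (heval 0)).mul
        (continuous_star.measurable.comp ((hmeas j).comp (heval 0)))
    have hgi := hIntPair i j 0 0
    have hB := birkhoff_ae_complex herg hgm hgi
    have hval : ∫ u, f i (u 0) * (starRingEnd ℂ) (f j (u 0)) ∂ν = Gmat i j := by
      have hm' : Measurable (fun x => f i x * (starRingEnd ℂ) (f j x)) :=
        (hmeas i).mul (hconjmeas j)
      have : Gmat i j = ∫ x, f i x * (starRingEnd ℂ) (f j x) ∂μ := rfl
      rw [this, ← hlaw 0, integral_map (heval 0).aemeasurable hm'.aestronglyMeasurable]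
    filter_upwards [hB] with u hu
    rw [hval] at hu
    refine hu.congr fun n => ?_
    congr 1
    refine Finset.sum_congr rfl fun m _ => ?_
    rw [hiter m u 0, Nat.zero_add]
  -- G₁ entries converge a.e. to (K * Gmat) entries
  have hG1entry : ∀ (i j : Fin k), ∀ᵐ u ∂ν,
      Tendsto (fun n : ℕ => (1 / (n:ℂ)) * ∑ m ∈ Finset.range n,
        f i (u (m+1)) * (starRingEnd ℂ) (f j (u m))) atTop (nhds ((K * Gmat) i j)) := by
    intro i j
    set g1 : (ℕ → M) → ℂ := fun u => f i (u 1) * (starRingEnd ℂ) (f j (u 0)) with hg1def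
    have hgm : Measurable g1 :=
      ((hmeas i).comp (heval 1)).mul
        (continuous_star.measurable.comp ((hmeas j).comp (heval 0)))
    have hgi : Integrable g1 ν := hIntPair i j 1 0
    have hB := birkhoff_ae_complex herg hgm hgi
    have hval : ∫ u, g1 u ∂ν = (K * Gmat) i j := by
      have hcomp := hνn 0
      set e : (ℕ → M) → (Fin 1 → M) := fun u => fun i : Fin 1 => u ↑i with he
      have hem : Measurable e := measurable_pi_lambda _ fun i => measurable_pi_apply _
      set π : (ℕ → M) → (Fin 1 → M) × M := fun u => (e u, u 1) with hπdef
      set ρ : Measure (Fin 1 → M) := ν.map e with hρ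
      haveI : IsProbabilityMeasure ρ := Measure.isProbabilityMeasure_map hem.aemeasurable
      set κ' := κ.comap (fun v : Fin 1 → M => v (Fin.last 0)) (measurable_pi_apply _) with hκ'
      have hcomp' : ν.map π = ρ ⊗ₘ κ' := hcomp
      set Fc : (Fin 1 → M) × M → ℂ :=
        fun p => f i p.2 * (starRingEnd ℂ) (f j (p.1 0)) with hFc
      have hFm : Measurable Fc :=
        ((hmeas i).comp measurable_snd).mul
          (continuous_star.measurable.comp
            ((hmeas j).comp ((measurable_pi_apply 0).comp measurable_fst)))
      have hπm : Measurable π := hem.prodMk (heval 1)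
      have hg1F : g1 = Fc ∘ π := by
        funext u
        simp [hg1def, hFc, hπdef, he]
      have hIntF : Integrable Fc (ν.map π) :=
        (integrable_map_measure hFm.aestronglyMeasurable hπm.aemeasurable).mpr (hg1F ▸ hgi)
      have hstep1 : ∫ u, g1 u ∂ν = ∫ p, Fc p ∂(ν.map π) := by
        rw [integral_map hπm.aemeasurable hFm.aestronglyMeasurable, hg1F]
        rfl
      have hIntF' : Integrable Fc (ρ ⊗ₘ κ') := hcomp' ▸ hIntF
      have hstep2 : ∫ p, Fc p ∂(ν.map π) = ∫ v, ∫ y, Fc (v, y) ∂(κ' v) ∂ρ := by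
        rw [hcomp', Measure.integral_compProd hIntF']
      have hκ'app : ∀ v : Fin 1 → M, κ' v = κ (v 0) := by
        intro v
        rw [hκ', Kernel.comap_apply]
        exact congrArg κ (congrArg v (Subsingleton.elim _ _))
      have hinner : ∀ v : Fin 1 → M, ∫ y, Fc (v, y) ∂(κ' v)
          = (∫ y, f i y ∂(κ (v 0))) * (starRingEnd ℂ) (f j (v 0)) := by
        intro v
        rw [hκ'app v]
        show ∫ y, f i y * (starRingEnd ℂ) (f j (v 0)) ∂κ (v 0) = _
        exact integral_mul_const _ _
      have hmapρ : ρ.map (fun v : Fin 1 → M => v 0) = μ := by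
        rw [hρ, Measure.map_map (measurable_pi_apply 0) hem]
        have : ((fun v : Fin 1 → M => v 0) ∘ e) = fun u : ℕ → M => u 0 := by
          funext u
          simp [he]
        rw [this, hν0]
      have hKim : StronglyMeasurable (fun x : M => ∫ y, f i y ∂(κ x)) :=
        MeasureTheory.StronglyMeasurable.integral_kernel_prod_right (κ := κ)
          (f := fun _ y => f i y) (((hmeas i).comp measurable_snd).stronglyMeasurable)
      have hstep3 : ∫ v, ∫ y, Fc (v, y) ∂(κ' v) ∂ρ
          = ∫ x, (∫ y, f i y ∂(κ x)) * (starRingEnd ℂ) (f j x) ∂μ := by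
        rw [← hmapρ, integral_map (measurable_pi_apply 0).aemeasurable
          ((hKim.measurable.mul (hconjmeas j)).aestronglyMeasurable)]
        exact integral_congr_ae (ae_of_all _ fun v => hinner v)
      have hstep4 : ∫ x, (∫ y, f i y ∂(κ x)) * (starRingEnd ℂ) (f j x) ∂μ
          = ∑ l, K i l * (Gmat l j) := by
        have hae : (fun x => (∫ y, f i y ∂(κ x)) * (starRingEnd ℂ) (f j x))
            =ᵐ[μ] fun x => ∑ l, K i l * (f l x * (starRingEnd ℂ) (f j x)) := by
          filter_upwards [hK] with x hx
          rw [hx i, Finset.sum_mul]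
          exact Finset.sum_congr rfl fun l _ => by ring
        rw [integral_congr_ae hae,
          integral_finset_sum _ (fun l _ => (hprodint l j).const_mul (K i l))]
        exact Finset.sum_congr rfl fun l _ => by rw [integral_const_mul]; rfl
      have hKG : (K * Gmat) i j = ∑ l, K i l * Gmat l j := by
        simp [Matrix.mul_apply]
      rw [hstep1, hstep2, hstep3, hstep4, hKG]
    filter_upwards [hB] with u hu
    rw [hval] at hu
    refine hu.congr fun n => ?_
    congr 1
    refine Finset.sum_congr rfl fun m _ => ?_
    show f i ((shift^[m] u) 1) * (starRingEnd ℂ) (f j ((shift^[m] u) 0)) = _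
    rw [hiter m u 1, hiter m u 0, Nat.zero_add, Nat.add_comm 1 m]
  -- Gram matrix is invertible
  have hGdet : Gmat.det ≠ 0 := by
    intro hdet
    obtain ⟨c, hc0, hcv⟩ := Matrix.exists_mulVec_eq_zero_iff.mpr hdet
    set h : M → ℂ := fun x => ∑ l, (starRingEnd ℂ) (c l) * f l x with hh
    have hh2 : MemLp h 2 μ := memLp_finset_sum _ (fun l _ => (hL2 l).const_mul _)
    have hint_term : ∀ (a b : Fin k), Integrable
        (fun x => ((starRingEnd ℂ) (c a) * f a x) * (c b * (starRingEnd ℂ) (f b x))) μ := by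
      intro a b
      have h1 := (hprodint a b).const_mul ((starRingEnd ℂ) (c a) * c b)
      exact h1.congr (ae_of_all _ fun x => by ring)
    have hconjh : ∀ x, (starRingEnd ℂ) (h x) = ∑ b, c b * (starRingEnd ℂ) (f b x) := by
      intro x
      rw [hh]
      simp [map_sum, map_mul]
    have hsum : ∫ x, h x * (starRingEnd ℂ) (h x) ∂μ
        = ∑ a, ∑ b, ((starRingEnd ℂ) (c a) * c b) * (Gmat a b) := by
      have hpt : ∀ x, h x * (starRingEnd ℂ) (h x)
          = ∑ a, ∑ b, ((starRingEnd ℂ) (c a) * f a x) * (c b * (starRingEnd ℂ) (f b x)) := by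
        intro x
        rw [hconjh x, hh, Finset.sum_mul_sum]
      rw [integral_congr_ae (ae_of_all _ hpt),
        integral_finset_sum _ (fun a _ => integrable_finset_sum _ (fun b _ => hint_term a b))]
      refine Finset.sum_congr rfl fun a _ => ?_
      rw [integral_finset_sum _ (fun b _ => hint_term a b)]
      refine Finset.sum_congr rfl fun b _ => ?_
      have hfe : (fun x => ((starRingEnd ℂ) (c a) * f a x) * (c b * (starRingEnd ℂ) (f b x)))
          = fun x => ((starRingEnd ℂ) (c a) * c b) * (f a x * (starRingEnd ℂ) (f b x)) := by
        funext x
        ring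
      rw [hfe, integral_const_mul]
      rfl
    have hzero : ∑ a : Fin k, ∑ b : Fin k, ((starRingEnd ℂ) (c a) * c b) * Gmat a b = 0 := by
      have hstep : ∀ a : Fin k, ∑ b : Fin k, ((starRingEnd ℂ) (c a) * c b) * Gmat a b
          = (starRingEnd ℂ) (c a) * (Gmat.mulVec c a) := by
        intro a
        have hmv : (Gmat.mulVec c) a = ∑ b, Gmat a b * c b := by
          simp [Matrix.mulVec, dotProduct]
        rw [hmv, Finset.mul_sum]
        exact Finset.sum_congr rfl fun b _ => by ring
      rw [Finset.sum_congr rfl (fun a _ => hstep a)]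
      simp [hcv]
    have hnsInt : Integrable (fun x => Complex.normSq (h x)) μ := by
      have h1 := integrable_sq_norm hh2
      refine h1.congr (ae_of_all _ fun x => ?_)
      show ‖h x‖ ^ 2 = Complex.normSq (h x)
      rw [Complex.sq_norm]
    have hIzero : ∫ x, Complex.normSq (h x) ∂μ = 0 := by
      have h1 : ∫ x, h x * (starRingEnd ℂ) (h x) ∂μ
          = ((∫ x, Complex.normSq (h x) ∂μ : ℝ) : ℂ) := by
        rw [integral_congr_ae (ae_of_all _ fun x => Complex.mul_conj (h x))]
        exact integral_ofReal
      rw [hsum, hzero] at h1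
      exact_mod_cast h1.symm
    have hae0 : ∀ᵐ x ∂μ, Complex.normSq (h x) = 0 := by
      have h2 := (integral_eq_zero_iff_of_nonneg
        (fun x => Complex.normSq_nonneg _) hnsInt).mp hIzero
      filter_upwards [h2] with x hx using hx
    have hhzero : ∀ᵐ x ∂μ, ∑ l, (starRingEnd ℂ) (c l) * f l x = 0 := by
      filter_upwards [hae0] with x hx
      exact Complex.normSq_eq_zero.mp hx
    have hcind := hindep (fun l => (starRingEnd ℂ) (c l)) hhzero
    apply hc0
    funext l
    have hl := congrFun hcind l
    have := congrArg (starRingEnd ℂ) hl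
    simpa using this
  -- assemble
  have hae0 : ∀ᵐ u ∂ν, ∀ i j, Tendsto (fun n : ℕ => (1 / (n:ℂ)) * ∑ m ∈ Finset.range n,
      f i (u m) * (starRingEnd ℂ) (f j (u m))) atTop (nhds (Gmat i j)) :=
    ae_all_iff.mpr fun i => ae_all_iff.mpr fun j => hG0entry i j
  have hae1 : ∀ᵐ u ∂ν, ∀ i j, Tendsto (fun n : ℕ => (1 / (n:ℂ)) * ∑ m ∈ Finset.range n,
      f i (u (m+1)) * (starRingEnd ℂ) (f j (u m))) atTop (nhds ((K * Gmat) i j)) :=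
    ae_all_iff.mpr fun i => ae_all_iff.mpr fun j => hG1entry i j
  filter_upwards [hae0, hae1] with u h0 h1
  have hT0 : Tendsto (fun n : ℕ => G₀ n u) atTop (nhds Gmat) := by
    refine tendsto_matrix_of_entries fun i j => ?_
    rw [hG₀]
    exact h0 i j
  have hT1 : Tendsto (fun n : ℕ => G₁ n u) atTop (nhds (K * Gmat)) := by
    refine tendsto_matrix_of_entries fun i j => ?_
    rw [hG₁]
    exact h1 i j
  have hdetc : Continuous (fun A : Matrix (Fin k) (Fin k) ℂ => A.det) :=
    Continuous.matrix_det continuous_id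
  have hdet_tend : Tendsto (fun n : ℕ => (G₀ n u).det) atTop (nhds Gmat.det) :=
    (hdetc.tendsto _).comp hT0
  have hev : ∀ᶠ n in atTop, (G₀ n u).det ≠ 0 := hdet_tend.eventually_ne hGdet
  constructor
  · filter_upwards [hev] with n hn
    exact (Matrix.isUnit_iff_isUnit_det _).mpr (isUnit_iff_ne_zero.mpr hn)
  · have hinv_tend : Tendsto (fun n : ℕ => (G₀ n u)⁻¹) atTop (nhds Gmat⁻¹) := by
      simp only [Matrix.inv_def, Ring.inverse_eq_inv']
      exact Tendsto.smul (hdet_tend.inv₀ hGdet)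
        (((Continuous.matrix_adjugate continuous_id).tendsto _).comp hT0)
    have hmulc : Continuous (fun p : (Matrix (Fin k) (Fin k) ℂ) × (Matrix (Fin k) (Fin k) ℂ)
        => p.1 * p.2) := continuous_fst.matrix_mul continuous_snd
    have := (hmulc.tendsto (K * Gmat, Gmat⁻¹)).comp (hT1.prodMk_nhds hinv_tend)
    have hfinal : (K * Gmat) * Gmat⁻¹ = K := by
      rw [Matrix.mul_assoc, Matrix.mul_nonsing_inv _ (isUnit_iff_ne_zero.mpr hGdet), Matrix.mul_one]
    rw [← hfinal]
    exact this
end
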